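/- arXiv:2603.09477 — 4 statements merged into one kernel-verified Lean document; each statement's English description precedes it below -/
import Mathlib

section
/- Let V and E be finite-dimensional complex vector spaces, let d = dim V ≥ 2, let v : Fin d → V be a basis of V, and let Υ : ⋀²V →ₗ[ℂ] E be a linear map. Then the following are equivalent: (a) there exists a family A : Fin d → Matrix (Fin 2) (Fin 2) ℂ such that ∑_{i,j} Υ(vᵢ ∧ vⱼ) ⊗ (Aᵢ·Aⱼ − Aⱼ·Aᵢ) = 0 in E ⊗[ℂ] Matrix (Fin 2) (Fin 2) ℂ, while Aᵢ·Aⱼ ≠ Aⱼ·Aᵢ for some indices i, j; (b) there exist u, w ∈ V with u ∧ w ≠ 0 in ⋀²V and Υ(u ∧ w) = 0. -/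
open scoped TensorProduct

/-- The wedge product `u ∧ w` of two vectors, as an element of the second exterior
power `⋀[ℂ]^2 V` (a submodule of the exterior algebra). -/
noncomputable def wedge {V : Type*} [AddCommGroup V] [Module ℂ V] (u w : V) :
    ⋀[ℂ]^2 V :=
  ⟨ExteriorAlgebra.ιMulti ℂ 2 ![u, w],
    ExteriorAlgebra.ιMulti_range ℂ 2 ⟨![u, w], rfl⟩⟩

namespace StmtAux

open ExteriorAlgebra

variable {V : Type*} [AddCommGroup V] [Module ℂ V]

lemma wedge_coe (u w : V) :
    ((wedge u w : ⋀[ℂ]^2 V) : ExteriorAlgebra ℂ V) = ι ℂ u * ι ℂ w := by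
  show ιMulti ℂ 2 ![u, w] = _
  rw [ιMulti_apply]
  simp

lemma ι_anticomm (x y : V) : ι ℂ x * ι ℂ y = -(ι ℂ y * ι ℂ x) := by
  rw [eq_neg_iff_add_eq_zero]
  exact ι_add_mul_swap x y

lemma expand {d : ℕ} (p q : Fin d → ℂ) (v : Fin d → V) :
    ι ℂ (∑ i, p i • v i) * ι ℂ (∑ i, q i • v i)
      = ∑ i, ∑ j, (p i * q j) • (ι ℂ (v i) * ι ℂ (v j)) := by
  rw [map_sum, Finset.sum_mul]
  refine Finset.sum_congr rfl fun i _ => ?_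
  rw [map_sum, Finset.mul_sum]
  refine Finset.sum_congr rfl fun j _ => ?_
  simp [smul_mul_assoc, mul_smul_comm, smul_smul, mul_comm]

lemma sum_wedge {d : ℕ} (v : Fin d → V) (p q : Fin d → ℂ) :
    ∑ i, ∑ j, (p i * q j - p j * q i) • wedge (v i) (v j)
      = (2 : ℂ) • wedge (∑ i, p i • v i) (∑ i, q i • v i) := by
  apply Subtype.ext
  push_cast [AddSubmonoidClass.coe_finset_sum, SetLike.val_smul, wedge_coe]
  rw [expand]
  have swap : ∑ i, ∑ j, (p j * q i) • (ι ℂ (v i) * ι ℂ (v j))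
      = -∑ i, ∑ j, (p i * q j) • (ι ℂ (v i) * ι ℂ (v j)) := by
    rw [Finset.sum_comm, ← Finset.sum_neg_distrib]
    refine Finset.sum_congr rfl fun j _ => ?_
    rw [← Finset.sum_neg_distrib]
    refine Finset.sum_congr rfl fun i _ => ?_
    rw [ι_anticomm (v j) (v i)]
    simp
  calc ∑ i, ∑ j, (p i * q j - p j * q i) • (ι ℂ (v i) * ι ℂ (v j))
      = (∑ i, ∑ j, (p i * q j) • (ι ℂ (v i) * ι ℂ (v j)))
        - ∑ i, ∑ j, (p j * q i) • (ι ℂ (v i) * ι ℂ (v j)) := by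
        rw [← Finset.sum_sub_distrib]
        refine Finset.sum_congr rfl fun i _ => ?_
        rw [← Finset.sum_sub_distrib]
        exact Finset.sum_congr rfl fun j _ => by rw [sub_smul]
    _ = (2 : ℂ) • ∑ i, ∑ j, (p i * q j) • (ι ℂ (v i) * ι ℂ (v j)) := by
        rw [swap, sub_neg_eq_add, two_smul]

noncomputable def altPair (f g : V →ₗ[ℂ] ℂ) : V [⋀^Fin 2]→ₗ[ℂ] ℂ :=
  { ((MultilinearMap.mkPiAlgebra ℂ (Fin 2) ℂ).compLinearMap ![f, g] -
      (MultilinearMap.mkPiAlgebra ℂ (Fin 2) ℂ).compLinearMap ![g, f]) with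
    map_eq_zero_of_eq' := by
      intro x i j hx hij
      have h01 : x 0 = x 1 := by
        fin_cases i <;> fin_cases j <;> simp_all
      simp [MultilinearMap.mkPiAlgebra_apply, Fin.prod_univ_two, h01, mul_comm] }

lemma altPair_apply (f g : V →ₗ[ℂ] ℂ) (u w : V) :
    altPair f g ![u, w] = f u * g w - g u * f w := by
  simp [altPair, MultilinearMap.mkPiAlgebra_apply, Fin.prod_univ_two]

noncomputable def altFam (f g : V →ₗ[ℂ] ℂ) : ∀ i : ℕ, V [⋀^Fin i]→ₗ[ℂ] ℂ
  | 2 => altPair f g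
  | _ => 0

lemma wedge_ne_zero (u w : V) (f g : V →ₗ[ℂ] ℂ)
    (h : f u * g w - g u * f w ≠ 0) : wedge u w ≠ 0 := by
  intro hz
  have hc : (wedge u w : ExteriorAlgebra ℂ V) = 0 := by rw [hz]; rfl
  have h2 : liftAlternating (R := ℂ) (altFam f g) (ιMulti ℂ 2 ![u, w]) = 0 := by
    show liftAlternating (R := ℂ) (altFam f g)
      ((wedge u w : ⋀[ℂ]^2 V) : ExteriorAlgebra ℂ V) = 0
    rw [hc, map_zero]
  rw [liftAlternating_apply_ιMulti] at h2
  exact h (by rw [← altPair_apply f g u w]; exact h2)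

def entryLM (k l : Fin 2) : Matrix (Fin 2) (Fin 2) ℂ →ₗ[ℂ] ℂ where
  toFun M := M k l
  map_add' := fun _ _ => rfl
  map_smul' := fun _ _ => rfl

noncomputable def contr (E : Type*) [AddCommGroup E] [Module ℂ E]
    (φ : Matrix (Fin 2) (Fin 2) ℂ →ₗ[ℂ] ℂ) :
    E ⊗[ℂ] Matrix (Fin 2) (Fin 2) ℂ →ₗ[ℂ] E :=
  TensorProduct.lift ((LinearMap.lsmul ℂ E).comp φ).flip

@[simp] lemma contr_tmul (E : Type*) [AddCommGroup E] [Module ℂ E]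
    (φ : Matrix (Fin 2) (Fin 2) ℂ →ₗ[ℂ] ℂ) (e : E) (m : Matrix (Fin 2) (Fin 2) ℂ) :
    contr E φ (e ⊗ₜ[ℂ] m) = φ m • e := rfl

lemma coord_sum {d : ℕ} (v : Module.Basis (Fin d) ℂ V) (c : Fin d → ℂ) (i : Fin d) :
    v.coord i (∑ j, c j • v j) = c i := by
  simp [Module.Basis.coord_apply, map_sum, Module.Basis.repr_self, Finsupp.single_apply]

/-- Core of direction (a) ⇒ (b). -/
lemma core {E : Type*} [AddCommGroup E] [Module ℂ E] {d : ℕ}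
    (v : Module.Basis (Fin d) ℂ V) (Υ : (⋀[ℂ]^2 V) →ₗ[ℂ] E)
    (A : Fin d → Matrix (Fin 2) (Fin 2) ℂ)
    (heq : ∑ i : Fin d, ∑ j : Fin d,
        (Υ (wedge (v i) (v j))) ⊗ₜ[ℂ] (A i * A j - A j * A i)
        = (0 : E ⊗[ℂ] Matrix (Fin 2) (Fin 2) ℂ))
    (k l : Fin 2) (p q : Matrix (Fin 2) (Fin 2) ℂ → ℂ)
    (hpq : ∀ X Y : Matrix (Fin 2) (Fin 2) ℂ,
      (X * Y - Y * X) k l = p X * q Y - p Y * q X)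
    (i₀ j₀ : Fin d) (hne : (A i₀ * A j₀ - A j₀ * A i₀) k l ≠ 0) :
    ∃ u w : V, wedge u w ≠ 0 ∧ Υ (wedge u w) = 0 := by
  set u : V := ∑ i, p (A i) • v i with hu
  set w : V := ∑ i, q (A i) • v i with hw
  refine ⟨u, w, ?_, ?_⟩
  · refine wedge_ne_zero u w (v.coord i₀) (v.coord j₀) ?_
    rw [hu, hw, coord_sum, coord_sum, coord_sum, coord_sum, ← hpq]
    exact hne
  · have h0 := congrArg (contr E (entryLM k l)) heq
    rw [map_zero, map_sum] at h0
    have h1 : ∑ i : Fin d, ∑ j : Fin d,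
        (p (A i) * q (A j) - p (A j) * q (A i)) • Υ (wedge (v i) (v j)) = 0 := by
      rw [← h0]
      refine Finset.sum_congr rfl fun i _ => ?_
      rw [map_sum]
      refine Finset.sum_congr rfl fun j _ => ?_
      rw [contr_tmul]
      congr 1
      exact (hpq (A i) (A j)).symm
    have h2 : Υ (∑ i : Fin d, ∑ j : Fin d,
        (p (A i) * q (A j) - p (A j) * q (A i)) • wedge (v i) (v j)) = 0 := by
      rw [map_sum, ← h1]
      refine Finset.sum_congr rfl fun i _ => ?_
      rw [map_sum]
      exact Finset.sum_congr rfl fun j _ => by rw [map_smul]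
    rw [sum_wedge, map_smul] at h2
    have := smul_eq_zero.mp h2
    simpa using this

/-- If all 2×2 minors of the coordinates vanish, the wedge is zero. -/
lemma wedge_eq_zero_of_minors {d : ℕ} (v : Module.Basis (Fin d) ℂ V) (u w : V)
    (h : ∀ i j : Fin d, v.repr u i * v.repr w j = v.repr u j * v.repr w i) :
    wedge u w = 0 := by
  by_cases hw : w = 0
  · subst hw
    apply Subtype.ext
    rw [wedge_coe]
    simp
  · obtain ⟨j₀, hj₀⟩ : ∃ j, v.repr w j ≠ 0 := by
      by_contra hall
      push_neg at hall
      exact hw (by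
        have : v.repr w = 0 := Finsupp.ext fun j => hall j
        simpa [this] using (v.repr.symm_apply_apply w).symm)
    have hu : u = (v.repr u j₀ / v.repr w j₀) • w := by
      refine v.ext_elem fun i => ?_
      rw [map_smul]
      simp only [Finsupp.smul_apply, smul_eq_mul]
      field_simp
      linear_combination h i j₀
    rw [hu]
    apply Subtype.ext
    rw [wedge_coe]
    simp [smul_mul_assoc, ExteriorAlgebra.ι_sq_zero]

end StmtAux

open StmtAux in
/-- Semi-rigidity criterion in the local model: there is a
non-commuting solution of `μ(α) = 0` in `V ⊗ 𝔤𝔩₂` if and only if `ker Υ`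
contains a nonzero decomposable element. -/
theorem stmt0 {V E : Type*} [AddCommGroup V] [Module ℂ V] [FiniteDimensional ℂ V]
    [AddCommGroup E] [Module ℂ E] [FiniteDimensional ℂ E]
    (d : ℕ) (hd : 2 ≤ d) (hdim : Module.finrank ℂ V = d)
    (v : Module.Basis (Fin d) ℂ V)
    (Υ : (⋀[ℂ]^2 V) →ₗ[ℂ] E) :
    (∃ A : Fin d → Matrix (Fin 2) (Fin 2) ℂ,
        (∑ i : Fin d, ∑ j : Fin d,
            (Υ (wedge (v i) (v j))) ⊗ₜ[ℂ] (A i * A j - A j * A i)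
          = (0 : E ⊗[ℂ] Matrix (Fin 2) (Fin 2) ℂ)) ∧
        ∃ i j : Fin d, A i * A j ≠ A j * A i)
      ↔
    (∃ u w : V, wedge u w ≠ 0 ∧ Υ (wedge u w) = 0) := by
  constructor
  · rintro ⟨A, heq, i₀, j₀, hne⟩
    have hC : A i₀ * A j₀ - A j₀ * A i₀ ≠ 0 := sub_ne_zero.mpr hne
    obtain ⟨k, l, hkl⟩ : ∃ k l : Fin 2, (A i₀ * A j₀ - A j₀ * A i₀) k l ≠ 0 := by
      by_contra hall
      push_neg at hall
      exact hC (by ext k l; simpa using hall k l)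
    fin_cases k <;> fin_cases l
    · exact core v Υ A heq 0 0 (fun M => M 0 1) (fun M => M 1 0)
        (fun X Y => by simp [Matrix.mul_apply, Fin.sum_univ_two, Matrix.sub_apply]; ring)
        i₀ j₀ hkl
    · exact core v Υ A heq 0 1 (fun M => M 0 0 - M 1 1) (fun M => M 0 1)
        (fun X Y => by simp [Matrix.mul_apply, Fin.sum_univ_two, Matrix.sub_apply]; ring)
        i₀ j₀ hkl
    · exact core v Υ A heq 1 0 (fun M => M 1 0) (fun M => M 0 0 - M 1 1)
        (fun X Y => by simp [Matrix.mul_apply, Fin.sum_univ_two, Matrix.sub_apply]; ring)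
        i₀ j₀ hkl
    · exact core v Υ A heq 1 1 (fun M => M 1 0) (fun M => M 0 1)
        (fun X Y => by simp [Matrix.mul_apply, Fin.sum_univ_two, Matrix.sub_apply]; ring)
        i₀ j₀ hkl
  · rintro ⟨u, w, hne, hker⟩
    set a : Fin d → ℂ := fun i => v.repr u i with ha
    set b : Fin d → ℂ := fun i => v.repr w i with hb
    set A : Fin d → Matrix (Fin 2) (Fin 2) ℂ := fun i => !![0, a i; b i, 0] with hA
    have hcomm : ∀ i j, A i * A j - A j * A i
        = (a i * b j - a j * b i) • !![(1:ℂ), 0; 0, -1] := by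
      intro i j
      ext k l
      fin_cases k <;> fin_cases l <;>
        simp [hA, Matrix.mul_apply, Fin.sum_univ_two] <;> ring
    have hminor : ∃ i j, a i * b j ≠ a j * b i := by
      by_contra hall
      push_neg at hall
      exact hne (wedge_eq_zero_of_minors v u w hall)
    obtain ⟨i₁, j₁, hij⟩ := hminor
    refine ⟨A, ?_, i₁, j₁, ?_⟩
    · have hu : ∑ i, a i • v i = u := v.sum_repr u
      have hw : ∑ i, b i • v i = w := v.sum_repr w
      calc ∑ i : Fin d, ∑ j : Fin d,
            (Υ (wedge (v i) (v j))) ⊗ₜ[ℂ] (A i * A j - A j * A i)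
          = (∑ i : Fin d, ∑ j : Fin d,
              (a i * b j - a j * b i) • Υ (wedge (v i) (v j)))
              ⊗ₜ[ℂ] !![(1:ℂ), 0; 0, -1] := by
            rw [TensorProduct.sum_tmul]
            refine Finset.sum_congr rfl fun i _ => ?_
            rw [TensorProduct.sum_tmul]
            refine Finset.sum_congr rfl fun j _ => ?_
            rw [hcomm, TensorProduct.tmul_smul, TensorProduct.smul_tmul']
        _ = (Υ (∑ i : Fin d, ∑ j : Fin d,
              (a i * b j - a j * b i) • wedge (v i) (v j)))
              ⊗ₜ[ℂ] !![(1:ℂ), 0; 0, -1] := by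
            congr 1
            rw [map_sum]
            refine Finset.sum_congr rfl fun i _ => ?_
            rw [map_sum]
            exact Finset.sum_congr rfl fun j _ => by rw [map_smul]
        _ = 0 := by
            rw [sum_wedge, hu, hw, map_smul, hker, smul_zero,
              TensorProduct.zero_tmul]
    · intro hcontra
      have h0 : A i₁ * A j₁ - A j₁ * A i₁ = 0 := sub_eq_zero.mpr hcontra
      rw [hcomm] at h0
      have hc : a i₁ * b j₁ - a j₁ * b i₁ = 0 := by
        have h00 := congrFun (congrFun h0 0) 0
        simpa [Matrix.smul_apply] using h00
      exact hij (sub_eq_zero.mp hc)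
end

section
/- Let V and E be finite-dimensional complex vector spaces, let Υ : ⋀²V →ₗ[ℂ] E be a linear map, and let u, w ∈ V satisfy u ∧ w ≠ 0 in ⋀²V and Υ(u ∧ w) = 0. Then for every integer n ≥ 2 there exist matrices X, Y ∈ Matrix (Fin n) (Fin n) ℂ such that: (u ∧ w) ⊗ (X·Y − Y·X) ≠ 0 in ⋀²V ⊗[ℂ] Matrix (Fin n) (Fin n) ℂ; Υ(u ∧ w) ⊗ (X·Y − Y·X) = 0 in E ⊗[ℂ] Matrix (Fin n) (Fin n) ℂ; and every matrix B with B·X = X·B and B·Y = Y·B is a scalar multiple of the identity. -/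
set_option synthInstance.maxHeartbeats 400000
set_option maxHeartbeats 1000000

open scoped TensorProduct

section aux
variable {n : ℕ}

noncomputable def entryFun (n : ℕ) (i j : Fin n) : Matrix (Fin n) (Fin n) ℂ →ₗ[ℂ] ℂ where
  toFun M := M i j
  map_add' _ _ := rfl
  map_smul' _ _ := rfl

lemma tmul_ne_zero_of {M : Type*} [AddCommGroup M] [Module ℂ M]
    (v : M) (hv : v ≠ 0) (A : Matrix (Fin n) (Fin n) ℂ) (i j : Fin n) (hA : A i j ≠ 0) :
    v ⊗ₜ[ℂ] A ≠ (0 : M ⊗[ℂ] Matrix (Fin n) (Fin n) ℂ) := by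
  obtain ⟨φ, hφ⟩ : ∃ φ : Module.Dual ℂ M, φ v ≠ 0 := by
    by_contra h
    push_neg at h
    exact hv ((Module.forall_dual_apply_eq_zero_iff ℂ v).mp h)
  intro h0
  have h1 := congrArg (TensorProduct.map φ (entryFun n i j)) h0
  rw [TensorProduct.map_tmul, map_zero] at h1
  have h2 : φ v * A i j = 0 := by
    have := congrArg (TensorProduct.lid ℂ ℂ) h1
    have he : entryFun n i j A = A i j := rfl
    simpa [he, smul_eq_mul] using this
  exact (mul_ne_zero hφ hA) h2

end aux

/-- A nonzero decomposable element `u ∧ w` of `ker Υ` produces, for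
every `n ≥ 2`, a non-commuting solution of `μ(α) = 0` in `V ⊗ 𝔤𝔩ₙ` with scalar
stabiliser. -/
theorem stmt2 {V E : Type*} [AddCommGroup V] [Module ℂ V] [FiniteDimensional ℂ V]
    [AddCommGroup E] [Module ℂ E] [FiniteDimensional ℂ E]
    (Υ : (⋀[ℂ]^2 V) →ₗ[ℂ] E)
    (u w : V) (hne : wedge u w ≠ 0) (hker : Υ (wedge u w) = 0)
    (n : ℕ) (hn : 2 ≤ n) :
    ∃ X Y : Matrix (Fin n) (Fin n) ℂ,
      (wedge u w) ⊗ₜ[ℂ] (X * Y - Y * X)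
          ≠ (0 : (⋀[ℂ]^2 V) ⊗[ℂ] Matrix (Fin n) (Fin n) ℂ) ∧
      (Υ (wedge u w)) ⊗ₜ[ℂ] (X * Y - Y * X)
          = (0 : E ⊗[ℂ] Matrix (Fin n) (Fin n) ℂ) ∧
      ∀ B : Matrix (Fin n) (Fin n) ℂ,
        B * X = X * B → B * Y = Y * B → ∃ c : ℂ, B = c • (1 : Matrix (Fin n) (Fin n) ℂ) := by
  have hnpos : 0 < n := by omega
  haveI : NeZero n := ⟨by omega⟩
  set d : Fin n → ℂ := fun i => (i : ℕ) with hdd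
  set X : Matrix (Fin n) (Fin n) ℂ := Matrix.diagonal d with hX
  set Y : Matrix (Fin n) (Fin n) ℂ := fun i j => if j = i + 1 then 1 else 0 with hY
  have hYe : ∀ i j, Y i j = if j = i + 1 then 1 else 0 := fun _ _ => rfl
  have hd : Function.Injective d := by
    intro i j h
    have h' : ((i : ℕ) : ℂ) = ((j : ℕ) : ℂ) := h
    exact Fin.ext (Nat.cast_injective h')
  have hv1 : ((1 : Fin n) : ℕ) = 1 := by
    simp [Fin.val_one', Nat.mod_eq_of_lt (by omega : 1 < n)]
  have hne01 : (0 : Fin n) ≠ 1 := by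
    intro h
    have := congrArg Fin.val h
    rw [hv1] at this
    simp at this
  have h01 : (1 : Fin n) = 0 + 1 := (zero_add 1).symm
  have hXY : (X * Y - Y * X) 0 1 ≠ 0 := by
    have : (X * Y - Y * X) 0 1 = d 0 - d 1 := by
      simp [hX, hYe, Matrix.sub_apply, Matrix.diagonal_mul, Matrix.mul_diagonal, ← h01]
    rw [this]
    intro h
    exact hne01 (hd (sub_eq_zero.mp h))
  refine ⟨X, Y, ?_, by rw [hker, TensorProduct.zero_tmul], ?_⟩
  · exact tmul_ne_zero_of _ hne _ 0 1 hXY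
  · intro B hBX hBY
    have hdiag : ∀ i j, i ≠ j → B i j = 0 := by
      intro i j hij
      have h := congrFun (congrFun hBX i) j
      simp only [hX, Matrix.diagonal_mul, Matrix.mul_diagonal] at h
      have h2 : B i j * (d j - d i) = 0 := by ring_nf; linear_combination h
      rcases mul_eq_zero.mp h2 with h3 | h3
      · exact h3
      · exact absurd (hd (sub_eq_zero.mp h3)).symm hij
    have hstep : ∀ i : Fin n, B (i+1) (i+1) = B i i := by
      intro i
      have h := congrFun (congrFun hBY i) (i+1)
      simp only [Matrix.mul_apply, hYe, ite_mul, mul_ite, one_mul, mul_one, zero_mul,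
        mul_zero, add_left_inj] at h
      rw [Finset.sum_ite_eq Finset.univ i, Finset.sum_ite_eq' Finset.univ (i+1 : Fin n)] at h
      simpa using h.symm
    have hconst : ∀ m : ℕ, ∀ h : m < n, B ⟨m, h⟩ ⟨m, h⟩ = B ⟨0, hnpos⟩ ⟨0, hnpos⟩ := by
      intro m
      induction m with
      | zero => intro h; rfl
      | succ k ih =>
        intro h
        have hk : k < n := by omega
        have heq : (⟨k, hk⟩ : Fin n) + 1 = ⟨k+1, h⟩ := by
          simp [Fin.ext_iff, Fin.add_def, hv1, Nat.mod_eq_of_lt (by omega : k + 1 < n)]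
        rw [← heq, hstep]
        exact ih hk
    refine ⟨B ⟨0, hnpos⟩ ⟨0, hnpos⟩, ?_⟩
    ext i j
    rcases eq_or_ne i j with rfl | hij
    · have h := hconst i.val i.isLt
      simp only [Matrix.smul_apply, Matrix.one_apply_eq, smul_eq_mul, mul_one]
      simpa using h
    · simp [Matrix.one_apply, hij, hdiag i j hij]
end

section
/- Let n, d ≥ 1, let μ, ν : Fin d → Fin n → ℂ, and let g ∈ Matrix (Fin n) (Fin n) ℂ be invertible with Matrix.diagonal (ν k) = g · Matrix.diagonal (μ k) · g⁻¹ for every k ∈ Fin d. Then there exists a permutation σ of Fin n such that ν k i = μ k (σ i) for all k ∈ Fin d and all i ∈ Fin n. -/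
open Matrix Finset

lemma aux_card_le {n : ℕ} (g : Matrix (Fin n) (Fin n) ℂ) (hg : IsUnit g)
    (B A : Fin n → Prop) (hAB : ∀ i j, B i → g j i ≠ 0 → A j) :
    Nat.card {i // B i} ≤ Nat.card {j // A j} := by
  classical
  have hinj : Function.Injective g.mulVec := mulVec_injective_iff_isUnit.2 hg
  set c : {i // B i} → ({j // A j} → ℂ) := fun i j => g j.1 i.1 with hc
  have hli : LinearIndependent ℂ c := by
    rw [Fintype.linearIndependent_iff]
    intro b hb i
    set x : Fin n → ℂ := fun i' => if h : B i' then b ⟨i', h⟩ else 0 with hx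
    have key : ∀ j : Fin n, g.mulVec x j = ∑ i' : {i // B i}, b i' * g j i'.1 := by
      intro j
      rw [mulVec, dotProduct]
      rw [← Finset.sum_filter_add_sum_filter_not Finset.univ B]
      have h2 : ∑ i' ∈ Finset.univ.filter (fun i' => ¬ B i'), g j i' * x i' = 0 := by
        apply Finset.sum_eq_zero
        intro i' hi'
        simp only [Finset.mem_filter] at hi'
        simp [hx, hi'.2]
      rw [h2, add_zero]
      rw [Finset.sum_subtype (Finset.univ.filter B) (p := B) (by simp)
        (fun i' => g j i' * x i')]
      apply Finset.sum_congr rfl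
      intro i' _
      simp [hx, i'.2, mul_comm]
    have hgx : g.mulVec x = 0 := by
      funext j
      rw [key j]
      by_cases hj : A j
      · have := congrFun hb ⟨j, hj⟩
        simpa [hc, Finset.sum_apply] using this
      · apply Finset.sum_eq_zero
        intro i' _
        have : g j i'.1 = 0 := by
          by_contra hne; exact hj (hAB i'.1 j i'.2 hne)
        simp [this]
    have hx0 : x = 0 := hinj (by simpa using hgx)
    have := congrFun hx0 i.1
    simpa [hx, i.2] using this
  have := hli.fintype_card_le_finrank
  simpa [Nat.card_eq_fintype_card, Module.finrank_fintype_fun_eq_card] using this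

/-- The unordered set of joint eigenvalue tuples of a simultaneously
diagonalisable commuting tuple is invariant under simultaneous conjugation: if
`diagonal (ν k) = g · diagonal (μ k) · g⁻¹` for all `k`, the columns of `ν` are a
permutation of those of `μ`. -/
theorem stmt13 (n d : ℕ) (hn : 1 ≤ n) (hd : 1 ≤ d)
    (μ ν : Fin d → Fin n → ℂ)
    (g : Matrix (Fin n) (Fin n) ℂ) (hg : IsUnit g)
    (h : ∀ k : Fin d, Matrix.diagonal (ν k) = g * Matrix.diagonal (μ k) * g⁻¹) :
    ∃ σ : Equiv.Perm (Fin n), ∀ (k : Fin d) (i : Fin n), ν k i = μ k (σ i) := by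
  classical
  have hgdet : IsUnit g.det := (Matrix.isUnit_iff_isUnit_det g).1 hg
  have hswap : ∀ k, diagonal (ν k) * g = g * diagonal (μ k) := by
    intro k
    calc diagonal (ν k) * g = g * diagonal (μ k) * g⁻¹ * g := by rw [h k]
      _ = g * diagonal (μ k) := by
          rw [mul_assoc, Matrix.nonsing_inv_mul g hgdet, mul_one]
  -- entries
  have hentry : ∀ k j i, g j i ≠ 0 → ν k j = μ k i := by
    intro k j i hne
    have := congrFun (congrFun (hswap k) j) i
    rw [Matrix.diagonal_mul, Matrix.mul_diagonal] at this
    exact mul_right_cancel₀ hne (by rw [this, mul_comm])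
  have hswap' : ∀ k, diagonal (μ k) * g⁻¹ = g⁻¹ * diagonal (ν k) := by
    intro k
    calc diagonal (μ k) * g⁻¹ = g⁻¹ * (g * diagonal (μ k)) * g⁻¹ := by
          rw [← mul_assoc, Matrix.nonsing_inv_mul g hgdet, one_mul]
      _ = g⁻¹ * (diagonal (ν k) * g) * g⁻¹ := by rw [hswap k]
      _ = g⁻¹ * diagonal (ν k) := by
          rw [mul_assoc, mul_assoc, Matrix.mul_nonsing_inv g hgdet, mul_one]
  have hentry' : ∀ k j i, g⁻¹ j i ≠ 0 → μ k j = ν k i := by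
    intro k j i hne
    have := congrFun (congrFun (hswap' k) j) i
    rw [Matrix.diagonal_mul, Matrix.mul_diagonal] at this
    exact mul_right_cancel₀ hne (by rw [this, mul_comm])
  set V : Fin n → (Fin d → ℂ) := fun j k => ν k j with hV
  set M : Fin n → (Fin d → ℂ) := fun i k => μ k i with hM
  have hcard : ∀ v : Fin d → ℂ, Nat.card {j // V j = v} = Nat.card {i // M i = v} := by
    intro v
    apply le_antisymm
    · exact aux_card_le g⁻¹ (Matrix.isUnit_nonsing_inv_iff.2 hg)
        (fun j => V j = v) (fun i => M i = v)
        (fun i j hi hne => by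
          funext k; rw [hM]; dsimp only
          rw [hentry' k j i hne]; exact congrFun hi k)
    · exact aux_card_le g hg (fun i => M i = v) (fun j => V j = v)
        (fun i j hi hne => by
          funext k; rw [hV]; dsimp only
          rw [hentry k j i hne]; exact congrFun hi k)
  have hfib : ∀ v : Fin d → ℂ, Nonempty ({j // V j = v} ≃ {i // M i = v}) := by
    intro v
    exact ⟨Fintype.equivOfCardEq (by
      rw [← Nat.card_eq_fintype_card, ← Nat.card_eq_fintype_card]; exact hcard v)⟩
  let σ : Fin n ≃ Fin n := Equiv.ofFiberEquiv (f := V) (g := M) (fun v => (hfib v).some)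
  refine ⟨σ, fun k i => ?_⟩
  have : M (σ i) = V i := Equiv.ofFiberEquiv_map (fun v => (hfib v).some) i
  have := congrFun this k
  simpa [hV, hM] using this.symm
end

section
/- Let V and E be finite-dimensional complex vector spaces, let v : Fin d → V be a basis of V, and let Υ : ⋀²V →ₗ[ℂ] E be an injective linear map. Let n ≥ 1 and let A : Fin d → Matrix (Fin n) (Fin n) ℂ satisfy ∑_{i,j} Υ(vᵢ ∧ vⱼ) ⊗ (Aᵢ·Aⱼ − Aⱼ·Aᵢ) = 0 in E ⊗[ℂ] Matrix (Fin n) (Fin n) ℂ. Then the matrices Aᵢ pairwise commute: Aᵢ·Aⱼ = Aⱼ·Aᵢ for all i, j. -/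
open scoped TensorProduct

set_option synthInstance.maxHeartbeats 400000
set_option maxHeartbeats 1000000

noncomputable def coordPair {V : Type*} [AddCommGroup V] [Module ℂ V]
    {d : ℕ} (v : Module.Basis (Fin d) ℂ V) (k l : Fin d) : V →ₗ[ℂ] (Fin 2 → ℂ) :=
  LinearMap.pi ![v.coord k, v.coord l]

/-- The degree-2 alternating form picking the (k,l) wedge coefficient. -/
noncomputable def omega {V : Type*} [AddCommGroup V] [Module ℂ V]
    {d : ℕ} (v : Module.Basis (Fin d) ℂ V) (k l : Fin d) : V [⋀^Fin 2]→ₗ[ℂ] ℂ :=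
  (Matrix.detRowAlternating).compLinearMap (coordPair v k l)

noncomputable def phi {V : Type*} [AddCommGroup V] [Module ℂ V]
    {d : ℕ} (v : Module.Basis (Fin d) ℂ V) (k l : Fin d) : (⋀[ℂ]^2 V) →ₗ[ℂ] ℂ :=
  (ExteriorAlgebra.liftAlternating
    (Function.update (fun _ => 0) 2 (omega v k l))).comp (⋀[ℂ]^2 V).subtype

theorem phi_wedge {V : Type*} [AddCommGroup V] [Module ℂ V]
    {d : ℕ} (v : Module.Basis (Fin d) ℂ V) (k l : Fin d) (u w : V) :
    phi v k l (wedge u w)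
      = v.coord k u * v.coord l w - v.coord l u * v.coord k w := by
  show ExteriorAlgebra.liftAlternating _ (ExteriorAlgebra.ιMulti ℂ 2 ![u, w]) = _
  rw [ExteriorAlgebra.liftAlternating_apply_ιMulti, Function.update_self]
  show Matrix.det (Matrix.of fun i => coordPair v k l (![u, w] i)) = _
  rw [Matrix.det_fin_two]
  simp [coordPair]

/-- If the skew-symmetric Yoneda pairing `Υ` is injective, then every
solution of `μ(α) = 0` in `V ⊗ 𝔤𝔩ₙ` consists of pairwise commuting matrices, i.e. the
quadratic cone `μ⁻¹(0)` coincides with the commuting scheme. -/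
theorem stmt14 {V E : Type*} [AddCommGroup V] [Module ℂ V] [FiniteDimensional ℂ V]
    [AddCommGroup E] [Module ℂ E] [FiniteDimensional ℂ E]
    (d : ℕ) (v : Module.Basis (Fin d) ℂ V)
    (Υ : (⋀[ℂ]^2 V) →ₗ[ℂ] E) (hΥ : Function.Injective Υ)
    (n : ℕ) (hn : 1 ≤ n)
    (A : Fin d → Matrix (Fin n) (Fin n) ℂ)
    (hA : (∑ i : Fin d, ∑ j : Fin d,
        (Υ (wedge (v i) (v j))) ⊗ₜ[ℂ] (A i * A j - A j * A i))
      = (0 : E ⊗[ℂ] Matrix (Fin n) (Fin n) ℂ)) :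
    ∀ i j : Fin d, A i * A j = A j * A i := by
  intro k l
  obtain ⟨ψ, hψ⟩ := Υ.exists_leftInverse_of_injective (LinearMap.ker_eq_bot.2 hΥ)
  have hψΥ : ∀ x, ψ (Υ x) = x := fun x => congrArg (· x) hψ
  let T : E ⊗[ℂ] Matrix (Fin n) (Fin n) ℂ →ₗ[ℂ] Matrix (Fin n) (Fin n) ℂ :=
    (TensorProduct.lid ℂ (Matrix (Fin n) (Fin n) ℂ)).toLinearMap ∘ₗ LinearMap.rTensor (Matrix (Fin n) (Fin n) ℂ) ((phi v k l) ∘ₗ ψ)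
  have h2 := congrArg T hA
  simp only [map_sum, map_zero] at h2
  have h3 : ∀ i j : Fin d,
      T ((Υ (wedge (v i) (v j))) ⊗ₜ[ℂ] (A i * A j - A j * A i))
        = (phi v k l (wedge (v i) (v j))) • (A i * A j - A j * A i) := by
    intro i j
    simp only [T, LinearMap.comp_apply, LinearMap.rTensor_tmul, LinearEquiv.coe_coe,
      TensorProduct.lid_tmul, hψΥ]
  simp only [h3, phi_wedge, Module.Basis.coord_apply, Module.Basis.repr_self_apply] at h2
  have h4 : ((A k * A l - A l * A k) - (A l * A k - A k * A l)
      : Matrix (Fin n) (Fin n) ℂ) = 0 := by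
    rw [← h2]
    simp [sub_smul, ite_smul, mul_ite, mul_one, mul_zero, ite_mul, one_mul, zero_mul,
      Finset.sum_sub_distrib, Finset.sum_ite_eq', Finset.mem_univ]
  have h5 : (2 : ℂ) • (A k * A l - A l * A k : Matrix (Fin n) (Fin n) ℂ) = 0 := by
    rw [two_smul]
    linear_combination (norm := abel_nf) h4
  have h6 := smul_eq_zero.mp h5
  simp only [OfNat.ofNat_ne_zero, false_or] at h6
  have := sub_eq_zero.mp h6
  exact this
end
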